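/- Let r_i denote the i-th smallest prime greater than 3. For every integer t ≥ 18, the product r₇·r₈·⋯·r_t is strictly greater than (3·(t+3)·2^(t-3) - 1)³. -/

import Mathlib

/-- `r i` is the `i`-th smallest prime greater than 3 (so `r 1 = 5`, `r 2 = 7`, ...). -/
noncomputable def r (i : ℕ) : ℕ := Nat.nth (fun q => Nat.Prime q ∧ 3 < q) (i - 1)

lemma p_inf : {q | Nat.Prime q ∧ 3 < q}.Infinite := by
  have h := Nat.infinite_setOf_prime.diff (Set.finite_Iic 3)
  apply h.mono
  intro q hq
  exact ⟨hq.1, not_le.mp hq.2⟩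

lemma r_eq_of (i n : ℕ) (h1 : Nat.count (fun q => Nat.Prime q ∧ 3 < q) n = i - 1)
    (h2 : Nat.Prime n ∧ 3 < n) : r i = n := by
  rw [r, ← h1, Nat.nth_count h2]

lemma r19 : r 19 = 73 := r_eq_of 19 73 (by decide) (by decide)

lemma r_ge (t : ℕ) (ht : 18 ≤ t) : 73 ≤ r (t + 1) := by
  rw [← r19]
  exact Nat.nth_monotone p_inf (by omega)

lemma base : ∏ i ∈ Finset.Icc 7 18, r i = 57521511525285752531 := by
  rw [show Finset.Icc 7 18 = {7,8,9,10,11,12,13,14,15,16,17,18} from rfl]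
  rw [Finset.prod_insert (by decide), Finset.prod_insert (by decide),
    Finset.prod_insert (by decide), Finset.prod_insert (by decide),
    Finset.prod_insert (by decide), Finset.prod_insert (by decide),
    Finset.prod_insert (by decide), Finset.prod_insert (by decide),
    Finset.prod_insert (by decide), Finset.prod_insert (by decide),
    Finset.prod_insert (by decide), Finset.prod_singleton]
  rw [r_eq_of 7 23 (by decide) (by decide), r_eq_of 8 29 (by decide) (by decide),
    r_eq_of 9 31 (by decide) (by decide), r_eq_of 10 37 (by decide) (by decide),
    r_eq_of 11 41 (by decide) (by decide), r_eq_of 12 43 (by decide) (by decide),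
    r_eq_of 13 47 (by decide) (by decide), r_eq_of 14 53 (by decide) (by decide),
    r_eq_of 15 59 (by decide) (by decide), r_eq_of 16 61 (by decide) (by decide),
    r_eq_of 17 67 (by decide) (by decide), r_eq_of 18 71 (by decide) (by decide)]
  norm_num

lemma key (u a m b : ℕ) (hu : 21 ≤ u) (ha : 32768 ≤ a)
    (hm : m + 1 = 3 * ((u + 1) * (a * 2))) (hb : b + 1 = 3 * (u * a)) :
    m ^ 3 < 73 * b ^ 3 := by
  have hua : 21 * 32768 ≤ u * a := Nat.mul_le_mul hu ha
  have hb' : 23 ≤ b := by omega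
  have h1 : 21 * m ≤ 45 * b := by nlinarith
  have h2 : (21 * m) ^ 3 ≤ (45 * b) ^ 3 := Nat.pow_le_pow_left h1 3
  nlinarith [pow_pos (show 0 < b by omega) 3]

theorem stmt_8 (t : ℕ) (ht : 18 ≤ t) :
    (3 * ((t + 3) * 2 ^ (t - 3)) - 1) ^ 3 < ∏ i ∈ Finset.Icc 7 t, r i := by
  induction t, ht using Nat.le_induction with
  | base => rw [base]; norm_num
  | succ t ht ih =>
    rw [Finset.prod_Icc_succ_top (by omega : 7 ≤ t + 1)]
    have hr := r_ge t ht
    have h3 : t + 1 - 3 = (t - 3) + 1 := by omega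
    rw [h3, pow_succ]
    set a := 2 ^ (t - 3) with haa
    have ha : 32768 ≤ a := by
      calc (32768 : ℕ) = 2 ^ 15 := by norm_num
      _ ≤ a := Nat.pow_le_pow_right (by norm_num) (by omega)
    set P := ∏ i ∈ Finset.Icc 7 t, r i with hP
    set m := 3 * ((t + 1 + 3) * (a * 2)) - 1 with hmm
    set b := 3 * ((t + 3) * a) - 1 with hbb
    have hpos1 : 0 < 3 * ((t + 1 + 3) * (a * 2)) := by positivity
    have hpos2 : 0 < 3 * ((t + 3) * a) := by positivity
    have hm : m + 1 = 3 * ((t + 1 + 3) * (a * 2)) := by omega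
    have hb : b + 1 = 3 * ((t + 3) * a) := by omega
    have hk : m ^ 3 < 73 * b ^ 3 := by
      apply key (t + 3) a m b (by omega) ha _ hb
      rw [hm]
    calc m ^ 3 < 73 * b ^ 3 := hk
      _ < 73 * P := by
          have : b ^ 3 < P := ih
          exact mul_lt_mul_of_pos_left this (by norm_num)
      _ ≤ P * r (t + 1) := by
          rw [mul_comm]
          exact Nat.mul_le_mul le_rfl hr
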